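/- Let Γ_{n,1} = n(A−I) + (J+αI)A − J and Γ_{n,2} = −n²A − n(J + (α+1)A + Y* − ad_A Y) + ((N−1)/|ν_{N−1}|²)(J − (αI+J)A), where the |ν_i| satisfy i(N−i)|ν_{N−1}|² = (N−1)|ν_i|² + (N−i−1)|ν_i|²|ν_{N−1}|² for i=1,…,N−2 and Y is the subdiagonal matrix with Y_{i+1,i} = i(N−i)/ν_i. Then Γ_{n,1} Γ_{n,2} = Γ_{n,2} Γ_{n,1} for all n ≥ 0. -/

import Mathlib

open Matrix
noncomputable section

def matA (N : ℕ) (ν : ℕ → ℂ) : Matrix (Fin N) (Fin N) ℂ :=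
  Matrix.of fun i j => if (j : ℕ) = (i : ℕ) + 1 then ν ((i : ℕ) + 1) else 0

def matJ (N : ℕ) : Matrix (Fin N) (Fin N) ℂ :=
  Matrix.diagonal fun i => ((N - 1 - (i : ℕ) : ℕ) : ℂ)

/-- The subdiagonal matrix with entries `Y_{i+1,i} = i(N-i)/ν_i`. -/
def matY (N : ℕ) (ν : ℕ → ℂ) : Matrix (Fin N) (Fin N) ℂ :=
  Matrix.of fun i j =>
    if (i : ℕ) = (j : ℕ) + 1 then (((i : ℕ) * (N - (i : ℕ)) : ℕ) : ℂ) / ν (i : ℕ) else 0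

/-- `Γ_{n,1} = n(A - I) + (J + αI)A - J`. -/
def Gamma1 (N : ℕ) (ν : ℕ → ℂ) (α : ℝ) (n : ℕ) : Matrix (Fin N) (Fin N) ℂ :=
  (n : ℂ) • (matA N ν - 1) + (matJ N + (α : ℂ) • (1 : Matrix (Fin N) (Fin N) ℂ)) * matA N ν
    - matJ N

/-- `Γ_{n,2} = -n²A - n(J + (α+1)A + Y* - ad_A Y) + ((N-1)/|ν_{N-1}|²)(J - (αI + J)A)`. -/
def Gamma2 (N : ℕ) (ν : ℕ → ℂ) (α : ℝ) (n : ℕ) : Matrix (Fin N) (Fin N) ℂ :=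
  -((n : ℂ) ^ 2) • matA N ν
    - (n : ℂ) • (matJ N + ((α : ℂ) + 1) • matA N ν + (matY N ν)ᴴ
        - (matA N ν * matY N ν - matY N ν * matA N ν))
    + (((N - 1 : ℕ) : ℂ) / (((‖ν (N - 1)‖ : ℝ) : ℂ)) ^ 2) •
        (matJ N - ((α : ℂ) • (1 : Matrix (Fin N) (Fin N) ℂ) + matJ N) * matA N ν)

lemma sum_if_val {N : ℕ} (m : ℕ) (f : Fin N → ℂ) :
    (∑ k : Fin N, if (k : ℕ) = m then f k else 0) = if h : m < N then f ⟨m, h⟩ else 0 := by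
  split
  · next h =>
    rw [Finset.sum_eq_single (⟨m, h⟩ : Fin N)]
    · simp
    · intro k _ hk
      have : (k : ℕ) ≠ m := fun he => hk (Fin.ext he)
      simp [this]
    · simp
  · next h =>
    apply Finset.sum_eq_zero
    intro k _
    have : (k : ℕ) ≠ m := by omega
    simp [this]

lemma AY_apply {N : ℕ} (ν : ℕ → ℂ) (hν : ∀ i, 1 ≤ i → i ≤ N - 1 → ν i ≠ 0) (i j : Fin N) :
    (matA N ν * matY N ν) i j =
      if i = j then ((((i : ℕ) + 1) * (N - 1 - (i : ℕ)) : ℕ) : ℂ) else 0 := by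
  rw [Matrix.mul_apply]
  simp only [matA, matY, of_apply, ite_mul, zero_mul, mul_ite, mul_zero]
  have key : ∀ k : Fin N, (if (k : ℕ) = (j : ℕ) + 1 then
      (if (k : ℕ) = (i : ℕ) + 1 then ν ((i:ℕ)+1) * ((((k:ℕ) * (N - (k:ℕ)) : ℕ) : ℂ) / ν (k:ℕ)) else 0)
      else 0) =
      if (k : ℕ) = (j : ℕ) + 1 then
        (if i = j then ν ((i:ℕ)+1) * (((((i:ℕ)+1) * (N - ((i:ℕ)+1)) : ℕ) : ℂ) / ν ((i:ℕ)+1)) else 0)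
      else 0 := by
    intro k
    by_cases hk : (k : ℕ) = (j : ℕ) + 1
    · rw [if_pos hk, if_pos hk]
      by_cases hij : i = j
      · have hk2 : (k : ℕ) = (i : ℕ) + 1 := by rw [hij]; exact hk
        rw [if_pos hij, if_pos hk2, hk2]
      · have hne : (k : ℕ) ≠ (i : ℕ) + 1 := by
          intro h
          exact hij (Fin.ext (by omega))
        rw [if_neg hne, if_neg hij]
    · rw [if_neg hk, if_neg hk]
  rw [Finset.sum_congr rfl (fun k _ => key k)]
  by_cases hij : i = j
  · subst hij
    simp only [if_pos rfl]
    rw [sum_if_val]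
    by_cases h : (i : ℕ) + 1 < N
    · rw [dif_pos h]
      have hν1 : ν ((i:ℕ)+1) ≠ 0 := hν ((i:ℕ)+1) (by omega) (by omega)
      rw [mul_comm, div_mul_cancel₀ _ hν1]
      have hsub : N - ((i:ℕ)+1) = N - 1 - (i:ℕ) := by omega
      rw [hsub]
    · rw [dif_neg h]
      have : N - 1 - (i : ℕ) = 0 := by have := i.isLt; omega
      simp [this]
  · simp only [if_neg hij]
    apply Finset.sum_eq_zero
    intro k _
    split <;> simp

lemma YA_apply {N : ℕ} (ν : ℕ → ℂ) (hν : ∀ i, 1 ≤ i → i ≤ N - 1 → ν i ≠ 0) (i j : Fin N) :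
    (matY N ν * matA N ν) i j =
      if i = j then (((i : ℕ) * (N - (i : ℕ)) : ℕ) : ℂ) else 0 := by
  rw [Matrix.mul_apply]
  simp only [matA, matY, of_apply, ite_mul, zero_mul, mul_ite, mul_zero]
  have key : ∀ k : Fin N, (if (j : ℕ) = (k : ℕ) + 1 then
      (if (i : ℕ) = (k : ℕ) + 1 then (((i:ℕ) * (N - (i:ℕ)) : ℕ) : ℂ) / ν (i:ℕ) * ν ((k:ℕ)+1) else 0)
      else 0) =
      if (i : ℕ) = (k : ℕ) + 1 then
        (if i = j then (((i:ℕ) * (N - (i:ℕ)) : ℕ) : ℂ) / ν (i:ℕ) * ν (i:ℕ) else 0)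
      else 0 := by
    intro k
    by_cases hk : (i : ℕ) = (k : ℕ) + 1
    · rw [if_pos hk]
      by_cases hij : i = j
      · have hk2 : (j : ℕ) = (k : ℕ) + 1 := by rw [← hij]; exact hk
        rw [if_pos hk2, if_pos hk, if_pos hij, ← hk]
      · have hne : (j : ℕ) ≠ (k : ℕ) + 1 := by
          intro h
          exact hij (Fin.ext (by omega))
        rw [if_neg hne, if_pos hk, if_neg hij]
    · rw [if_neg hk]
      by_cases hk2 : (j : ℕ) = (k : ℕ) + 1
      · rw [if_pos hk2, if_neg hk]
      · rw [if_neg hk2, if_neg hk]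
  rw [Finset.sum_congr rfl (fun k _ => key k)]
  by_cases hij : i = j
  · subst hij
    simp only [if_pos rfl]
    by_cases h0 : (i : ℕ) = 0
    · have : ∀ k : Fin N, (i : ℕ) ≠ (k : ℕ) + 1 := by intro k; omega
      simp [this, h0]
    · have hi1 : 1 ≤ (i : ℕ) := by omega
      have hilt : (i : ℕ) - 1 < N := by have := i.isLt; omega
      rw [Finset.sum_eq_single (⟨(i:ℕ) - 1, hilt⟩ : Fin N)]
      · have hc : (i : ℕ) = ((⟨(i:ℕ) - 1, hilt⟩ : Fin N) : ℕ) + 1 := by simp; omega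
        rw [if_pos hc]
        have hν1 : ν (i:ℕ) ≠ 0 := hν _ hi1 (by have := i.isLt; omega)
        rw [div_mul_cancel₀ _ hν1]
      · intro k _ hk
        have : (i : ℕ) ≠ (k : ℕ) + 1 := by
          intro h
          apply hk
          apply Fin.ext
          simp
          omega
        rw [if_neg this]
      · simp
  · simp only [if_neg hij]
    apply Finset.sum_eq_zero
    intro k _
    split <;> simp

lemma Yh_apply {N : ℕ} (ν : ℕ → ℂ) (i j : Fin N) :
    ((matY N ν)ᴴ) i j = if (j : ℕ) = (i : ℕ) + 1 then
      (((j : ℕ) * (N - (j : ℕ)) : ℕ) : ℂ) / (starRingEnd ℂ) (ν (j : ℕ)) else 0 := by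
  simp only [Matrix.conjTranspose_apply, matY, of_apply]
  split <;> simp [map_div₀]

lemma diag_mul_A {N : ℕ} (ν : ℕ → ℂ) (d : Fin N → ℂ) (i j : Fin N) :
    (Matrix.diagonal d * matA N ν) i j =
      if (j : ℕ) = (i : ℕ) + 1 then d i * ν ((i : ℕ) + 1) else 0 := by
  rw [Matrix.diagonal_mul]
  simp only [matA, of_apply, mul_ite, mul_zero]

lemma J_add {N : ℕ} (α : ℝ) : matJ N + (α : ℂ) • (1 : Matrix (Fin N) (Fin N) ℂ) =
    Matrix.diagonal (fun i : Fin N => ((N - 1 - (i : ℕ) : ℕ) : ℂ) + α) := by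
  ext a b
  by_cases h : a = b <;>
    simp [matJ, Matrix.diagonal_apply, Matrix.one_apply, h]

lemma add_J {N : ℕ} (α : ℝ) : (α : ℂ) • (1 : Matrix (Fin N) (Fin N) ℂ) + matJ N =
    Matrix.diagonal (fun i : Fin N => (α : ℂ) + ((N - 1 - (i : ℕ) : ℕ) : ℂ)) := by
  ext a b
  by_cases h : a = b <;>
    simp [matJ, Matrix.diagonal_apply, Matrix.one_apply, h]

lemma decomp (N : ℕ) (ν : ℕ → ℂ) (α : ℝ)
    (hν : ∀ i, 1 ≤ i → i ≤ N - 1 → ν i ≠ 0)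
    (hmod : ∀ i : ℕ, 1 ≤ i → i ≤ N - 2 →
      ((i * (N - i) : ℕ) : ℝ) * ‖ν (N - 1)‖ ^ 2 =
        ((N - 1 : ℕ) : ℝ) * ‖ν i‖ ^ 2 +
          ((N - i - 1 : ℕ) : ℝ) * ‖ν i‖ ^ 2 * ‖ν (N - 1)‖ ^ 2)
    (n : ℕ) :
    Gamma2 N ν α n =
      (-(n : ℂ) * ((n : ℂ) + ((N - 1 : ℕ) : ℂ)
          + ((N - 1 : ℕ) : ℂ) / (((‖ν (N - 1)‖ : ℝ) : ℂ)) ^ 2)) • (1 : Matrix (Fin N) (Fin N) ℂ)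
      - ((n : ℂ) + ((N - 1 : ℕ) : ℂ) / (((‖ν (N - 1)‖ : ℝ) : ℂ)) ^ 2) • Gamma1 N ν α n := by
  set c : ℂ := ((N - 1 : ℕ) : ℂ) / (((‖ν (N - 1)‖ : ℝ) : ℂ)) ^ 2 with hc
  ext i j
  rw [Gamma1, Gamma2, J_add, add_J]
  simp only [Matrix.sub_apply, Matrix.add_apply, Matrix.smul_apply, Matrix.neg_apply,
    smul_eq_mul, diag_mul_A, AY_apply ν hν, YA_apply ν hν, Yh_apply]
  simp only [matA, matJ, Matrix.of_apply, Matrix.diagonal_apply, Matrix.one_apply]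
  simp only [← hc]
  by_cases hij : (j : ℕ) = (i : ℕ) + 1
  · have hne : i ≠ j := by intro h; subst h; omega
    simp only [hij, if_pos rfl, if_neg hne, if_true]
    have hjlt := j.isLt
    have hile : (i : ℕ) + 1 ≤ N - 1 := by omega
    obtain ⟨d, hd⟩ : ∃ d, N = (i : ℕ) + 2 + d := ⟨N - (i:ℕ) - 2, by omega⟩
    have e1 : N - 1 - (i : ℕ) = d + 1 := by omega
    have e2 : N - ((i : ℕ) + 1) = d + 1 := by omega
    rw [e1, e2]
    have hkey : (((d : ℕ) : ℂ) + c) * ν ((i:ℕ)+1) =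
        ((((i:ℕ)+1) * (d+1) : ℕ) : ℂ) / (starRingEnd ℂ) (ν ((i:ℕ)+1)) := by
      have hν2 : ν (N - 1) ≠ 0 := hν (N - 1) (by omega) (by omega)
      have hν1 : ν ((i:ℕ)+1) ≠ 0 := hν ((i:ℕ)+1) (by omega) (by omega)
      have hs : ‖ν (N - 1)‖ ^ 2 ≠ 0 :=
        pow_ne_zero _ (norm_ne_zero_iff.mpr hν2)
      have hq : ‖ν ((i:ℕ)+1)‖ ^ 2 ≠ 0 :=
        pow_ne_zero _ (norm_ne_zero_iff.mpr hν1)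
      have hconj : (starRingEnd ℂ) (ν ((i:ℕ)+1)) ≠ 0 := by
        simpa using hν1
      rw [eq_div_iff hconj, mul_assoc, Complex.mul_conj, hc]
      have hR : (((d:ℕ):ℝ) + ((N - 1 : ℕ):ℝ) / (‖ν (N - 1)‖ ^ 2)) *
          Complex.normSq (ν ((i:ℕ)+1)) = ((((i:ℕ)+1) * (d+1) : ℕ) : ℝ) := by
        rw [← Complex.sq_norm]
        rcases Nat.eq_zero_or_pos d with hd0 | hd0
        · subst hd0
          rw [show N - 1 = (i:ℕ) + 1 from by omega]
          field_simp
          push_cast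
          ring
        · have hm := hmod ((i:ℕ)+1) (by omega) (by omega)
          rw [e2, show d + 1 - 1 = d from rfl] at hm
          field_simp
          push_cast [show N - 1 = (i:ℕ) + 1 + d from by omega] at hm ⊢
          linear_combination -hm
      exact_mod_cast hR
    push_cast at hkey ⊢
    linear_combination (n : ℂ) * hkey
  · by_cases hii : i = j
    · subst hii
      have h0 : ¬ ((i : ℕ) = (i : ℕ) + 1) := by omega
      simp only [if_neg h0, if_pos rfl, if_true]
      obtain ⟨d, hd⟩ : ∃ d, N = (i : ℕ) + 1 + d := ⟨N - (i:ℕ) - 1, by have := i.isLt; omega⟩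
      have e1 : N - 1 - (i : ℕ) = d := by omega
      have e2 : N - (i : ℕ) = d + 1 := by omega
      have e3 : N - 1 = (i : ℕ) + d := by omega
      rw [e1, e2, e3]
      push_cast
      ring
    · simp only [if_neg hij, if_neg hii]
      ring

theorem Gamma_commute (N : ℕ) (ν : ℕ → ℂ) (α : ℝ)
    (hν : ∀ i, 1 ≤ i → i ≤ N - 1 → ν i ≠ 0)
    (hmod : ∀ i : ℕ, 1 ≤ i → i ≤ N - 2 →
      ((i * (N - i) : ℕ) : ℝ) * ‖ν (N - 1)‖ ^ 2 =
        ((N - 1 : ℕ) : ℝ) * ‖ν i‖ ^ 2 +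
          ((N - i - 1 : ℕ) : ℝ) * ‖ν i‖ ^ 2 * ‖ν (N - 1)‖ ^ 2)
    (n : ℕ) :
    Gamma1 N ν α n * Gamma2 N ν α n = Gamma2 N ν α n * Gamma1 N ν α n := by
  rw [decomp N ν α hν hmod n]
  simp [mul_sub, sub_mul, Matrix.mul_smul, Matrix.smul_mul]
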